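/- For every γ ∈ (0,1), every T > 0 and every t ∈ (0,T], one has ∫_t^T s⁻¹·(ln(1+1/s))^(γ−1) ds ≤ ((1+T)/γ)·(ln(1+1/t))^γ. -/

import Mathlib

open Real Set MeasureTheory

theorem integral_sublog_bound (γ T t : ℝ) (hγ : γ ∈ Set.Ioo (0:ℝ) 1) (hT : 0 < T)
    (ht : t ∈ Set.Ioc (0:ℝ) T) :
    ∫ s in Set.Ioc t T, s⁻¹ * (Real.log (1 + 1/s)) ^ (γ - 1)
      ≤ ((1 + T) / γ) * (Real.log (1 + 1/t)) ^ γ := by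
  obtain ⟨hγ0, hγ1⟩ := hγ
  obtain ⟨ht0, htT⟩ := ht
  set θ : ℝ → ℝ := fun s => Real.log (1 + 1/s) with hθdef
  have hθpos : ∀ s : ℝ, 0 < s → 0 < θ s := by
    intro s hs
    have h1 : 0 < 1/s := by positivity
    exact Real.log_pos (by linarith)
  -- derivative of θ^γ
  have hderiv : ∀ s ∈ Set.Icc t T,
      HasDerivAt (fun u => (θ u) ^ γ) (γ * (θ s) ^ (γ-1) * (-(1/(s*(s+1))))) s := by
    intro s hs
    have hs0 : 0 < s := lt_of_lt_of_le ht0 hs.1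
    have h1 : HasDerivAt (fun u : ℝ => 1 + 1/u) (-(s^2)⁻¹) s := by
      simpa [one_div] using (hasDerivAt_inv hs0.ne').const_add 1
    have hpos : 0 < 1 + 1/s := by positivity
    have h2 : HasDerivAt (fun u : ℝ => Real.log (1 + 1/u)) (-(s^2)⁻¹ / (1 + 1/s)) s :=
      h1.log hpos.ne'
    have h3 := h2.rpow_const (p := γ) (Or.inl (hθpos s hs0).ne')
    have heq : -(s^2)⁻¹ / (1 + 1/s) = -(1/(s*(s+1))) := by
      rw [div_eq_iff hpos.ne']
      field_simp
    convert h3 using 1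
    simp only [hθdef]
    rw [heq]
    ring
  have huIcc : Set.uIcc t T = Set.Icc t T := Set.uIcc_of_le htT
  have hθcont : ContinuousOn θ (Set.Icc t T) := by
    apply ContinuousOn.log
    · exact continuousOn_const.add (continuousOn_const.div continuousOn_id
        (fun s hs => (lt_of_lt_of_le ht0 hs.1).ne'))
    · intro s hs
      have hs0 : 0 < s := lt_of_lt_of_le ht0 hs.1
      positivity
  have hθne : ∀ s ∈ Set.Icc t T, θ s ≠ 0 :=
    fun s hs => (hθpos s (lt_of_lt_of_le ht0 hs.1)).ne'
  have hpowcont : ContinuousOn (fun s => (θ s) ^ (γ-1)) (Set.Icc t T) :=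
    hθcont.rpow_const (fun s hs => Or.inl (hθne s hs))
  have hinvcont : ContinuousOn (fun s : ℝ => (s*(s+1))⁻¹) (Set.Icc t T) := by
    apply ContinuousOn.inv₀ (by fun_prop)
    intro s hs
    have hs0 : 0 < s := lt_of_lt_of_le ht0 hs.1
    positivity
  have hgcont : ContinuousOn (fun s => γ * (θ s) ^ (γ-1) * (-(1/(s*(s+1))))) (Set.Icc t T) := by
    apply ContinuousOn.mul (continuousOn_const.mul hpowcont)
    exact (by simpa [one_div] using hinvcont : ContinuousOn (fun s : ℝ => 1/(s*(s+1))) _).neg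
  have hfcont : ContinuousOn (fun s : ℝ => s⁻¹ * (θ s) ^ (γ-1)) (Set.Icc t T) := by
    apply ContinuousOn.mul _ hpowcont
    exact ContinuousOn.inv₀ continuousOn_id (fun s hs => (lt_of_lt_of_le ht0 hs.1).ne')
  have hFTC : ∫ s in t..T, γ * (θ s) ^ (γ-1) * (-(1/(s*(s+1)))) = (θ T)^γ - (θ t)^γ := by
    apply intervalIntegral.integral_eq_sub_of_hasDerivAt
    · intro s hs
      exact hderiv s (huIcc ▸ hs)
    · exact (huIcc ▸ hgcont).intervalIntegrable
  have hGcont : ContinuousOn (fun s => (1+T) * ((θ s) ^ (γ-1) * (s*(s+1))⁻¹)) (Set.Icc t T) :=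
    continuousOn_const.mul (hpowcont.mul hinvcont)
  have hmono : (∫ s in t..T, s⁻¹ * (θ s) ^ (γ-1))
      ≤ ∫ s in t..T, (1+T) * ((θ s) ^ (γ-1) * (s*(s+1))⁻¹) := by
    apply intervalIntegral.integral_mono_on htT
      ((huIcc ▸ hfcont).intervalIntegrable) ((huIcc ▸ hGcont).intervalIntegrable)
    intro s hs
    have hs0 : 0 < s := lt_of_lt_of_le ht0 hs.1
    have hsT : s ≤ T := hs.2
    have hθnn : 0 ≤ (θ s) ^ (γ-1) := Real.rpow_nonneg (hθpos s hs0).le _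
    have key : s⁻¹ ≤ (1+T) * (s*(s+1))⁻¹ := by
      have h1 : s⁻¹ = (s+1) * (s*(s+1))⁻¹ := by field_simp
      rw [h1]
      exact mul_le_mul_of_nonneg_right (by linarith) (by positivity)
    calc s⁻¹ * (θ s) ^ (γ-1) ≤ ((1+T) * (s*(s+1))⁻¹) * (θ s) ^ (γ-1) :=
          mul_le_mul_of_nonneg_right key hθnn
      _ = (1+T) * ((θ s) ^ (γ-1) * (s*(s+1))⁻¹) := by ring
  have h2 : (∫ s in t..T, (1+T) * ((θ s) ^ (γ-1) * (s*(s+1))⁻¹))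
      = (-(1+T)/γ) * ((θ T)^γ - (θ t)^γ) := by
    rw [← hFTC, ← intervalIntegral.integral_const_mul]
    apply intervalIntegral.integral_congr
    intro s hs
    have hs0 : 0 < s := lt_of_lt_of_le ht0 (by rw [huIcc] at hs; exact hs.1)
    field_simp
  have hset : (∫ s in Set.Ioc t T, s⁻¹ * (θ s) ^ (γ-1)) = ∫ s in t..T, s⁻¹ * (θ s) ^ (γ-1) :=
    (intervalIntegral.integral_of_le htT).symm
  have hθTnn : 0 ≤ (θ T)^γ := Real.rpow_nonneg (hθpos T hT).le _
  have hc : 0 ≤ (1+T)/γ := by positivity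
  calc (∫ s in Set.Ioc t T, s⁻¹ * (θ s) ^ (γ-1))
      ≤ (-(1+T)/γ) * ((θ T)^γ - (θ t)^γ) := by rw [hset, ← h2]; exact hmono
    _ = ((1+T)/γ) * ((θ t)^γ - (θ T)^γ) := by ring
    _ ≤ ((1+T)/γ) * (θ t)^γ := mul_le_mul_of_nonneg_left (by linarith) hc
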